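/- Let G be a topological group, H ≤ G closed with G/H admitting local cross sections, Y a locally compact Hausdorff H-space, and V a continuous G-module. The map μ sending f ∈ Ind_H^G C(Y, res V) = {f ∈ C(G, C(Y,V)) : f(gh⁻¹) = h·f(g)} to the function on G ×_H Y induced by (g,y) ↦ g·(f(g)(y)) is a well-defined G-equivariant linear homeomorphism onto C(G ×_H Y, V), where G acts on C(G ×_H Y, V) by (α·f)(x) = α·f(α⁻¹·x). -/

import Mathlib

open Set

section Aux

/-- Continuity of pairing with a fixed map, in the compact-open topology. -/
lemma continuous_prodMk_right' {X W V : Type*} [TopologicalSpace X] [TopologicalSpace W]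
    [TopologicalSpace V] [LocallyCompactSpace X] [T2Space X] (g : C(X, W)) :
    Continuous fun k : C(X, V) => g.prodMk k := by
  rw [ContinuousMap.continuous_compactOpen]
  intro K hK U hU
  rw [isOpen_iff_forall_mem_open]
  intro k₀ hk₀
  have key : ∀ x ∈ K, ∃ (N : Set X) (U2 : Set V), IsCompact N ∧ x ∈ interior N ∧ IsOpen U2 ∧
      (∀ x' ∈ N, k₀ x' ∈ U2) ∧ (∀ x' ∈ N, ∀ v ∈ U2, (g x', v) ∈ U) := by
    intro x hx
    obtain ⟨U1, U2, hU1, hU2, hw, hv, hsub⟩ := isOpen_prod_iff.mp hU (g x) (k₀ x) (hk₀ hx)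
    have hVopen : IsOpen (g ⁻¹' U1 ∩ k₀ ⁻¹' U2) :=
      (hU1.preimage g.continuous).inter (hU2.preimage k₀.continuous)
    obtain ⟨N, hNn, hNsub, hNc⟩ :=
      LocallyCompactSpace.local_compact_nhds x _ (hVopen.mem_nhds ⟨hw, hv⟩)
    exact ⟨N, U2, hNc, mem_interior_iff_mem_nhds.2 hNn, hU2,
      fun x' hx' => (hNsub hx').2, fun x' hx' v hv' => hsub ⟨(hNsub hx').1, hv'⟩⟩
  choose! N U2 hNc hNi hU2o hk₀N hNU using key
  obtain ⟨t, htK, hcov⟩ := hK.elim_nhds_subcover (fun x => interior (N x))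
    (fun x hx => isOpen_interior.mem_nhds (hNi x hx))
  refine ⟨⋂ x ∈ t, {k : C(X, V) | MapsTo k (K ∩ N x) (U2 x)}, ?_, ?_, ?_⟩
  · intro k hk x hx
    obtain ⟨x₀, hx₀t, hxint⟩ := mem_iUnion₂.mp (hcov hx)
    have hxN : x ∈ N x₀ := interior_subset hxint
    have hkx : k x ∈ U2 x₀ := (mem_iInter₂.mp hk x₀ hx₀t) ⟨hx, hxN⟩
    exact hNU x₀ (htK x₀ hx₀t) x hxN (k x) hkx
  · exact isOpen_biInter_finset fun x hxt =>
      ContinuousMap.isOpen_setOf_mapsTo (hK.inter_right (hNc x (htK x hxt)).isClosed)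
        (hU2o x (htK x hxt))
  · exact mem_iInter₂.mpr fun x hxt x' hx' => hk₀N x (htK x hxt) x' hx'.2

/-- Continuity criterion into `C(Z, V)` when `Z` is an open continuous surjective image of a
locally compact space. -/
lemma continuous_into_quot {X Z V T : Type*} [TopologicalSpace X] [TopologicalSpace Z]
    [TopologicalSpace V] [TopologicalSpace T] [LocallyCompactSpace X]
    {q : X → Z} (hq : Continuous q) (hqs : Function.Surjective q) (hqo : IsOpenMap q)
    {μ : T → C(Z, V)} (hμ : Continuous fun t => (μ t).comp ⟨q, hq⟩) :
    Continuous μ := by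
  rw [ContinuousMap.continuous_compactOpen]
  intro K hK U hU
  rw [isOpen_iff_forall_mem_open]
  intro t₀ ht₀
  have hOopen : IsOpen ((μ t₀) ⁻¹' U) := hU.preimage (μ t₀).continuous
  have key : ∀ z ∈ K, ∃ K' : Set X, IsCompact K' ∧ (q '' K') ⊆ (μ t₀) ⁻¹' U ∧
      z ∈ interior (q '' K') := by
    intro z hz
    obtain ⟨x, rfl⟩ := hqs z
    obtain ⟨K', hK'n, hK'sub, hK'c⟩ := LocallyCompactSpace.local_compact_nhds x _
      ((hOopen.preimage hq).mem_nhds (ht₀ hz))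
    refine ⟨K', hK'c, image_subset_iff.mpr hK'sub, ?_⟩
    exact interior_maximal (image_mono interior_subset) (hqo _ isOpen_interior)
      ⟨x, mem_interior_iff_mem_nhds.2 hK'n, rfl⟩
  choose! K' hK'c hK'sub hK'i using key
  obtain ⟨t, htK, hcov⟩ := hK.elim_nhds_subcover (fun z => interior (q '' K' z))
    (fun z hz => isOpen_interior.mem_nhds (hK'i z hz))
  refine ⟨⋂ z ∈ t, (fun s => (μ s).comp ⟨q, hq⟩) ⁻¹' {k : C(X, V) | MapsTo k (K' z) U},
      ?_, ?_, ?_⟩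
  · intro s hs z hz
    obtain ⟨z₀, hz₀t, hzint⟩ := mem_iUnion₂.mp (hcov hz)
    obtain ⟨x, hxK', hqx⟩ := interior_subset hzint
    have := (mem_iInter₂.mp hs z₀ hz₀t) hxK'
    simpa [hqx] using this
  · exact isOpen_biInter_finset fun z hzt => (ContinuousMap.isOpen_setOf_mapsTo
      (hK'c z (htK z hzt)) hU).preimage hμ
  · refine mem_iInter₂.mpr fun z hzt x hx => ?_
    exact hK'sub z (htK z hzt) (mem_image_of_mem q hx)

end Aux

/-- A map q : A → B admits local (continuous) cross sections. -/
def HasLocalSections {A B : Type*} [TopologicalSpace A] [TopologicalSpace B]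
    (q : A → B) : Prop :=
  ∀ b : B, ∃ (U : Set B) (s : B → A),
    IsOpen U ∧ b ∈ U ∧ ContinuousOn s U ∧ ∀ x ∈ U, q (s x) = x

/-- The diagonal H-action relation on G × Y defining the associated bundle G ×_H Y. -/
def assocRel {G : Type*} [Group G] (H : Subgroup G) (Y : Type*) [MulAction H Y] :
    G × Y → G × Y → Prop :=
  fun p q => ∃ h : H, q.1 = p.1 * (h : G)⁻¹ ∧ q.2 = h • p.2

section AssocRel

variable {G Y : Type*} [Group G] [TopologicalSpace G] [IsTopologicalGroup G]
  [TopologicalSpace Y] {H : Subgroup G} [MulAction H Y] [ContinuousSMul H Y]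

omit [TopologicalSpace G] [IsTopologicalGroup G] [TopologicalSpace Y] [ContinuousSMul (↥H) Y] in
lemma assocRel_equivalence : Equivalence (assocRel H Y) := by
  constructor
  · intro p; exact ⟨1, by simp, by simp⟩
  · rintro ⟨g, y⟩ ⟨g', y'⟩ ⟨h, h1, h2⟩
    refine ⟨h⁻¹, ?_, ?_⟩ <;> simp_all [mul_assoc]
  · rintro ⟨g, y⟩ ⟨g', y'⟩ ⟨g'', y''⟩ ⟨h, h1, h2⟩ ⟨h', h1', h2'⟩
    refine ⟨h' * h, ?_, ?_⟩ <;> simp_all [mul_assoc, mul_smul]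

lemma isOpenMap_assocQuot : IsOpenMap (Quot.mk (assocRel H Y)) := by
  intro W hW
  rw [← isQuotientMap_quot_mk.isOpen_preimage]
  have heq : Quot.mk (assocRel H Y) ⁻¹' (Quot.mk (assocRel H Y) '' W)
      = ⋃ h : H, (fun p : G × Y => (p.1 * (h : G)⁻¹, h • p.2)) ⁻¹' W := by
    ext p
    simp only [mem_preimage, mem_image, mem_iUnion]
    constructor
    · rintro ⟨w, hw, he⟩
      obtain ⟨h, h1, h2⟩ :=
        (assocRel_equivalence (H := H) (Y := Y)).eqvGen_iff.mp (Quot.eqvGen_exact he)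
      refine ⟨h⁻¹, ?_⟩
      have : (p.1 * ((h⁻¹ : H) : G)⁻¹, (h⁻¹ : H) • p.2) = w := by
        apply Prod.ext <;> simp [h1, h2, mul_assoc]
      rw [this]; exact hw
    · rintro ⟨h, hw⟩
      exact ⟨_, hw, (Quot.sound ⟨h, rfl, rfl⟩).symm⟩
  rw [heq]
  exact isOpen_iUnion fun h =>
    hW.preimage ((continuous_fst.mul continuous_const).prodMk (continuous_snd.const_smul h))

end AssocRel

/-- The induced module Ind_H^G C(Y, res V): continuous maps f : G → C(Y,V) with
f(gh⁻¹) = h·f(g), where H acts on C(Y,V) by (h·φ)(y) = h·φ(h⁻¹·y). -/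
abbrev IndC {G : Type*} [Group G] [TopologicalSpace G] (H : Subgroup G)
    (Y V : Type*) [TopologicalSpace Y] [MulAction H Y] [TopologicalSpace V]
    [SMul G V] : Type _ :=
  {f : C(G, C(Y, V)) //
    ∀ (h : H) (g : G) (y : Y), f (g * (h : G)⁻¹) y = (h : G) • f g (h⁻¹ • y)}

/-- The map μ : Ind_H^G C(Y, res V) → C(G ×_H Y, V), induced by
(g,y) ↦ g·(f(g)(y)), is a well-defined G-equivariant linear homeomorphism. -/
theorem stmt5 {G Y V : Type*} [Group G] [TopologicalSpace G] [IsTopologicalGroup G]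
    [LocallyCompactSpace G] [T2Space G]
    [TopologicalSpace Y] [LocallyCompactSpace Y] [T2Space Y]
    (H : Subgroup G) (hH : IsClosed (H : Set G)) [MulAction H Y] [ContinuousSMul H Y]
    [AddCommGroup V] [Module ℝ V] [TopologicalSpace V] [IsTopologicalAddGroup V]
    [ContinuousSMul ℝ V] [DistribMulAction G V] [ContinuousSMul G V]
    [SMulCommClass G ℝ V]
    (hGH : HasLocalSections (QuotientGroup.mk : G → G ⧸ H)) :
    ∃ e : IndC H Y V ≃ₜ C(Quot (assocRel H Y), V),
      (∀ (f : IndC H Y V) (g : G) (y : Y),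
        e f (Quot.mk (assocRel H Y) (g, y)) = g • (f.1 g y)) ∧
      (∀ (f₁ f₂ f₃ : IndC H Y V), (∀ g y, f₃.1 g y = f₁.1 g y + f₂.1 g y) →
        ∀ z, e f₃ z = e f₁ z + e f₂ z) ∧
      (∀ (c : ℝ) (f₁ f₂ : IndC H Y V), (∀ g y, f₂.1 g y = c • f₁.1 g y) →
        ∀ z, e f₂ z = c • e f₁ z) ∧
      (∀ (α : G) (f₁ f₂ : IndC H Y V), (∀ g y, f₂.1 g y = f₁.1 (α⁻¹ * g) y) →
        ∀ (g : G) (y : Y),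
          e f₂ (Quot.mk (assocRel H Y) (g, y))
            = α • e f₁ (Quot.mk (assocRel H Y) (α⁻¹ * g, y))) := by
  classical
  set q : G × Y → Quot (assocRel H Y) := Quot.mk (assocRel H Y) with hqdef
  have hqc : Continuous q := continuous_quot_mk
  have hqs : Function.Surjective q := Quot.mk_surjective
  have hqo : IsOpenMap q := isOpenMap_assocQuot
  -- well-definedness of μ
  have wd : ∀ (f : IndC H Y V) (a b : G × Y), assocRel H Y a b →
      a.1 • f.1 a.1 a.2 = b.1 • f.1 b.1 b.2 := by
    rintro f ⟨g, y⟩ ⟨g', y'⟩ ⟨h, h1, h2⟩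
    dsimp only at h1 h2 ⊢
    subst h1; subst h2
    rw [f.2 h g (h • y), inv_smul_smul, smul_smul, inv_mul_cancel_right]
  let μ : IndC H Y V → C(Quot (assocRel H Y), V) := fun f =>
    ⟨Quot.lift (fun p : G × Y => p.1 • f.1 p.1 p.2) (wd f),
      continuous_quot_lift _
        (continuous_smul.comp (continuous_fst.prodMk f.1.uncurry.continuous))⟩
  have hμapp : ∀ (f : IndC H Y V) (g : G) (y : Y),
      μ f (Quot.mk (assocRel H Y) (g, y)) = g • f.1 g y := fun f g y => rfl
  -- ν
  have hνc : ∀ F : C(Quot (assocRel H Y), V),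
      Continuous fun p : G × Y => (p.1)⁻¹ • F (q p) :=
    fun F => continuous_smul.comp ((continuous_fst.inv).prodMk (F.continuous.comp hqc))
  let ν0 : C(Quot (assocRel H Y), V) → C(G, C(Y, V)) := fun F =>
    ContinuousMap.curry ⟨fun p : G × Y => (p.1)⁻¹ • F (q p), hνc F⟩
  have hν0app : ∀ F g y, ν0 F g y = (g : G)⁻¹ • F (q (g, y)) := fun F g y => rfl
  have hν0mem : ∀ F (h : H) (g : G) (y : Y),
      ν0 F (g * (h : G)⁻¹) y = (h : G) • ν0 F g (h⁻¹ • y) := by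
    intro F h g y
    rw [hν0app, hν0app]
    have hqe : q (g * (h : G)⁻¹, y) = q (g, h⁻¹ • y) := by
      refine Quot.sound ⟨h⁻¹, ?_, ?_⟩
      · simp [mul_assoc]
      · rfl
    rw [hqe, mul_inv_rev, inv_inv, mul_smul]
  let ν : C(Quot (assocRel H Y), V) → IndC H Y V := fun F => ⟨ν0 F, hν0mem F⟩
  have linv : Function.LeftInverse ν μ := by
    intro f
    apply Subtype.ext
    ext g y
    show ν0 (μ f) g y = f.1 g y
    rw [hν0app, hμapp, inv_smul_smul]
  have rinv : Function.RightInverse ν μ := by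
    intro F
    ext z
    obtain ⟨⟨g, y⟩, rfl⟩ := hqs z
    show μ (ν F) (q (g, y)) = F (q (g, y))
    rw [hqdef, hμapp]
    show (g : G) • ((g : G)⁻¹ • F (q (g, y))) = F (q (g, y))
    rw [smul_inv_smul]
  have hμcont : Continuous μ := by
    apply continuous_into_quot hqc hqs hqo
    let A : C((G × Y) × V, V) :=
      ⟨fun pv => pv.1.1 • pv.2, continuous_smul.comp ((continuous_fst.fst).prodMk continuous_snd)⟩
    have hrem : (fun f : IndC H Y V => (μ f).comp ⟨q, hqc⟩)
        = fun f : IndC H Y V => A.comp ((ContinuousMap.id (G × Y)).prodMk f.1.uncurry) := by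
      funext f; ext p; rfl
    rw [hrem]
    exact (ContinuousMap.continuous_postcomp A).comp
      ((continuous_prodMk_right' (ContinuousMap.id (G × Y))).comp
        (ContinuousMap.continuous_uncurry.comp continuous_subtype_val))
  have hνcont : Continuous ν := by
    apply Continuous.subtype_mk
    let A' : C((G × Y) × V, V) :=
      ⟨fun pv => (pv.1.1)⁻¹ • pv.2,
        continuous_smul.comp ((continuous_fst.fst.inv).prodMk continuous_snd)⟩
    have hrem : ν0 = fun F : C(Quot (assocRel H Y), V) =>
        ContinuousMap.curry (A'.comp ((ContinuousMap.id (G × Y)).prodMk (F.comp ⟨q, hqc⟩))) := by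
      funext F; ext g y; rfl
    rw [hrem]
    exact ContinuousMap.continuous_curry.comp ((ContinuousMap.continuous_postcomp A').comp
      ((continuous_prodMk_right' (ContinuousMap.id (G × Y))).comp
        (ContinuousMap.continuous_precomp ⟨q, hqc⟩)))
  refine ⟨⟨⟨μ, ν, linv, rinv⟩, hμcont, hνcont⟩, ?_, ?_, ?_, ?_⟩
  · intro f g y; exact hμapp f g y
  · intro f₁ f₂ f₃ hadd z
    obtain ⟨⟨g, y⟩, rfl⟩ := hqs z
    show μ f₃ (q (g, y)) = μ f₁ (q (g, y)) + μ f₂ (q (g, y))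
    rw [hqdef, hμapp, hμapp, hμapp, hadd, smul_add]
  · intro c f₁ f₂ hs z
    obtain ⟨⟨g, y⟩, rfl⟩ := hqs z
    show μ f₂ (q (g, y)) = c • μ f₁ (q (g, y))
    rw [hqdef, hμapp, hμapp, hs]
    exact smul_comm g c _
  · intro α f₁ f₂ hs g y
    show μ f₂ (Quot.mk (assocRel H Y) (g, y))
        = α • μ f₁ (Quot.mk (assocRel H Y) (α⁻¹ * g, y))
    rw [hμapp, hμapp, hs, smul_smul, mul_inv_cancel_left]
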